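/- arXiv:1807.09116 — 2 statements merged into one kernel-verified Lean document; each statement's English description precedes it below -/
import Mathlib

section
/- For the intensity measure λ(x,y) = x^{-2} e^{-y/x} on [a,b] × ℝ₊ (0 < a ≤ b ≤ 1) and t < 1/b: ∫_a^b ∫_0^∞ (1 - e^{ty}) x^{-2} e^{-y/x} dy dx = -log((1-ta)/(1-tb)). -/
open Real MeasureTheory

lemma exp_rate_integral {c : ℝ} (hc : 0 < c) :
    ∫ y in Set.Ioi (0 : ℝ), Real.exp (-(c * y)) = c⁻¹ := by
  have := MeasureTheory.integral_comp_mul_left_Ioi (fun u => Real.exp (-u)) 0 hc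
  simp only [mul_zero, integral_exp_neg_Ioi, neg_zero, Real.exp_zero, smul_eq_mul,
    mul_one] at this
  exact this

lemma exp_rate_integrable {c : ℝ} (hc : 0 < c) :
    IntegrableOn (fun y => Real.exp (-(c * y))) (Set.Ioi (0 : ℝ)) := by
  simpa [neg_mul] using exp_neg_integrableOn_Ioi 0 hc

lemma inner_integral (x t : ℝ) (hx : 0 < x) (htx : t * x < 1) :
    ∫ y in Set.Ioi (0 : ℝ),
        (1 - Real.exp (t * y)) * (x ^ 2)⁻¹ * Real.exp (-y / x)
      = -t / (1 - t * x) := by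
  have hx' : (0:ℝ) < x⁻¹ := inv_pos.mpr hx
  have hc : 0 < x⁻¹ - t := by
    rcases le_or_gt t 0 with h | h
    · linarith
    · have : t < x⁻¹ := by
        rw [← one_div]
        exact (lt_div_iff₀ hx).mpr htx
      linarith
  have heq : ∀ y : ℝ, (1 - Real.exp (t * y)) * (x ^ 2)⁻¹ * Real.exp (-y / x)
      = (x ^ 2)⁻¹ * Real.exp (-(x⁻¹ * y)) - (x ^ 2)⁻¹ * Real.exp (-((x⁻¹ - t) * y)) := by
    intro y
    have : -y / x = -(x⁻¹ * y) := by field_simp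
    rw [this, show -((x⁻¹ - t) * y) = t * y + -(x⁻¹ * y) by ring]
    try rw [Real.exp_add]
    try ring
  rw [MeasureTheory.setIntegral_congr_fun measurableSet_Ioi (fun y _ => heq y)]
  rw [MeasureTheory.integral_sub ((exp_rate_integrable hx').const_mul _)
    ((exp_rate_integrable hc).const_mul _)]
  rw [MeasureTheory.integral_const_mul, MeasureTheory.integral_const_mul,
    exp_rate_integral hx', exp_rate_integral hc]
  have h1 : (1 : ℝ) - t * x ≠ 0 := by intro h; linarith [htx]
  have h2 : (x⁻¹ - t)⁻¹ = x / (1 - t * x) := by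
    rw [show x⁻¹ - t = (1 - t * x) / x by field_simp]
    rw [inv_div]
  rw [inv_inv, h2]
  field_simp
  have h1' : (1:ℝ) - x * t ≠ 0 := by rwa [mul_comm]
  linear_combination (-1 : ℝ) * mul_inv_cancel₀ h1'

/-- For the intensity `λ(x,y) = x⁻² e^{-y/x}` on `[a,b] × ℝ₊` (with `0 < a ≤ b ≤ 1`)
and `t < 1/b`:
`∫_a^b ∫_0^∞ (1 - e^{ty}) x⁻² e^{-y/x} dy dx = -log((1-ta)/(1-tb))`. -/
theorem intensity_integral_log (a b t : ℝ)
    (ha : 0 < a) (hab : a ≤ b) (hb : b ≤ 1) (ht : t < 1 / b) :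
    ∫ x in a..b, ∫ y in Set.Ioi (0 : ℝ),
        (1 - Real.exp (t * y)) * (x ^ 2)⁻¹ * Real.exp (-y / x)
      = -Real.log ((1 - t * a) / (1 - t * b)) := by
  have hb0 : 0 < b := lt_of_lt_of_le ha hab
  have hpos : ∀ x ∈ Set.Icc a b, (0:ℝ) < 1 - t * x := by
    intro x hx
    rcases le_or_gt t 0 with h | h
    · nlinarith [hx.1]
    · have : t * x ≤ t * b := by nlinarith [hx.2]
      have htb : t * b < 1 := by
        have := (lt_div_iff₀ hb0).mp ht
        linarith
      linarith
  have hcong : ∀ x ∈ Set.uIcc a b,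
      (∫ y in Set.Ioi (0 : ℝ),
        (1 - Real.exp (t * y)) * (x ^ 2)⁻¹ * Real.exp (-y / x)) = -t / (1 - t * x) := by
    intro x hx
    rw [Set.uIcc_of_le hab] at hx
    exact inner_integral x t (lt_of_lt_of_le ha hx.1) (by linarith [hpos x hx])
  rw [intervalIntegral.integral_congr hcong]
  have hderiv : ∀ x ∈ Set.uIcc a b,
      HasDerivAt (fun u => Real.log (1 - t * u)) (-t / (1 - t * x)) x := by
    intro x hx
    rw [Set.uIcc_of_le hab] at hx
    have h1 : (1:ℝ) - t * x ≠ 0 := ne_of_gt (hpos x hx)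
    have : HasDerivAt (fun u => 1 - t * u) (-t) x := by
      simpa using ((hasDerivAt_id x).const_mul t).const_sub 1
    exact this.log h1
  have hcont : IntervalIntegrable (fun x => -t / (1 - t * x)) volume a b := by
    apply ContinuousOn.intervalIntegrable
    apply ContinuousOn.div continuousOn_const
    · exact (continuousOn_const.sub (continuousOn_const.mul continuousOn_id))
    · intro x hx
      rw [Set.uIcc_of_le hab] at hx
      exact ne_of_gt (hpos x hx)
  rw [intervalIntegral.integral_eq_sub_of_hasDerivAt (fun x hx => hderiv x hx) hcont]
  rw [Real.log_div (ne_of_gt (hpos a ⟨le_refl a, hab⟩)) (ne_of_gt (hpos b ⟨hab, le_refl b⟩))]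
  ring
end

section
/- Fix an integer n ≥ 2 and R > 1. For any index 1 ≤ j ≤ n-1, the iterated integral over the simplex {R^{-1} ≤ x_1 ≤ x_2 ≤ … ≤ x_n ≤ 1} of the function 1/(x_1⋯x_{j-1} · x_{j+1}^2 · x_{j+2} ⋯ x_n) (i.e. omitting x_j from the denominator and squaring x_{j+1}) is at most (log R)^{n-1}. -/
open MeasureTheory Real
open scoped ENNReal

noncomputable def mgeAux (R : ℝ) : ℝ → ℝ≥0∞ :=
  Set.indicator (Set.Icc R⁻¹ 1) (fun u => ENNReal.ofReal u⁻¹)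

noncomputable def mfeAux (R : ℝ) : ℝ × ℝ → ℝ≥0∞ := fun p =>
  if p.1 ∈ Set.Icc R⁻¹ 1 ∧ p.1 ≤ p.2 ∧ p.2 ≤ 1 then ENNReal.ofReal ((p.2 ^ 2)⁻¹) else 0

lemma mgeAux_meas (R : ℝ) : Measurable (mgeAux R) :=
  (ENNReal.measurable_ofReal.comp measurable_inv).indicator measurableSet_Icc

lemma mfeAux_meas (R : ℝ) : Measurable (mfeAux R) := by
  apply Measurable.ite
  · have : {p : ℝ × ℝ | p.1 ∈ Set.Icc R⁻¹ 1 ∧ p.1 ≤ p.2 ∧ p.2 ≤ 1}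
        = ({p : ℝ × ℝ | R⁻¹ ≤ p.1} ∩ {p | p.1 ≤ 1}) ∩ ({p | p.1 ≤ p.2} ∩ {p | p.2 ≤ 1}) := by
      ext p; simp [Set.mem_Icc, and_assoc]
    rw [this]
    exact (((measurableSet_le measurable_const measurable_fst).inter
      (measurableSet_le measurable_fst measurable_const)).inter
      ((measurableSet_le measurable_fst measurable_snd).inter
      (measurableSet_le measurable_snd measurable_const)))
  · exact ENNReal.measurable_ofReal.comp ((measurable_snd.pow_const 2).inv)
  · exact measurable_const

lemma lintegral_mgeAux (R : ℝ) (hR : 1 < R) :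
    ∫⁻ t, mgeAux R t = ENNReal.ofReal (Real.log R) := by
  have hR0 : (0:ℝ) < R⁻¹ := inv_pos.2 (lt_trans zero_lt_one hR)
  have hle : R⁻¹ ≤ 1 := le_of_lt (inv_lt_one_of_one_lt₀ hR)
  have hint : IntegrableOn (fun t : ℝ => t⁻¹) (Set.Icc R⁻¹ 1) := by
    apply ContinuousOn.integrableOn_Icc
    exact ContinuousOn.inv₀ continuousOn_id fun t ht => ne_of_gt (lt_of_lt_of_le hR0 ht.1)
  have hpos : 0 ≤ᵐ[volume.restrict (Set.Icc R⁻¹ 1)] fun t : ℝ => t⁻¹ :=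
    (ae_restrict_iff' measurableSet_Icc).2 (ae_of_all _ fun t ht =>
      inv_nonneg.2 (le_trans hR0.le ht.1))
  rw [mgeAux, lintegral_indicator measurableSet_Icc,
    ← ofReal_integral_eq_lintegral_ofReal hint hpos]
  congr 1
  rw [MeasureTheory.integral_Icc_eq_integral_Ioc, ← intervalIntegral.integral_of_le hle,
    integral_inv (Set.notMem_uIcc_of_lt hR0 zero_lt_one)]
  rw [one_div, inv_inv]

lemma lintegral_mfeAux (R : ℝ) (hR : 1 < R) (s : ℝ) :
    ∫⁻ t, mfeAux R (s, t) ≤ mgeAux R s := by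
  have hR0 : (0:ℝ) < R⁻¹ := inv_pos.2 (lt_trans zero_lt_one hR)
  by_cases hs : s ∈ Set.Icc R⁻¹ 1
  · have hs0 : 0 < s := lt_of_lt_of_le hR0 hs.1
    have h1 : ∀ t, mfeAux R (s, t)
        = Set.indicator (Set.Icc s 1) (fun u => ENNReal.ofReal ((u ^ 2)⁻¹)) t := by
      intro t
      by_cases h : t ∈ Set.Icc s 1
      · rw [Set.indicator_of_mem h]
        exact if_pos ⟨hs, h.1, h.2⟩
      · rw [Set.indicator_of_notMem h]
        refine if_neg fun hc => h ⟨hc.2.1, hc.2.2⟩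
    simp only [h1]
    have hint : IntegrableOn (fun t : ℝ => (t ^ 2)⁻¹) (Set.Icc s 1) := by
      apply ContinuousOn.integrableOn_Icc
      exact ContinuousOn.inv₀ ((continuous_pow 2).continuousOn)
        fun t ht => pow_ne_zero 2 (ne_of_gt (lt_of_lt_of_le hs0 ht.1))
    have hpos : 0 ≤ᵐ[volume.restrict (Set.Icc s 1)] fun t : ℝ => (t ^ 2)⁻¹ :=
      ae_of_all _ fun t => by positivity
    rw [lintegral_indicator measurableSet_Icc,
      ← ofReal_integral_eq_lintegral_ofReal hint hpos]
    have hval : ∫ t in Set.Icc s 1, (t ^ 2)⁻¹ = s⁻¹ - 1 := by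
      rw [MeasureTheory.integral_Icc_eq_integral_Ioc, ← intervalIntegral.integral_of_le hs.2]
      have hz : ∀ x : ℝ, (x ^ 2)⁻¹ = x ^ (-2 : ℤ) := by
        intro x; rw [zpow_neg]; norm_cast
      simp only [hz]
      rw [integral_zpow (Or.inr ⟨by norm_num, Set.notMem_uIcc_of_lt hs0 zero_lt_one⟩)]
      norm_num
      ring
    rw [hval]
    have hge : mgeAux R s = ENNReal.ofReal s⁻¹ := Set.indicator_of_mem hs _
    rw [hge]
    exact ENNReal.ofReal_le_ofReal (by simp)
  · have h0 : ∀ t, mfeAux R (s, t) = 0 := fun t => if_neg fun hc => hs hc.1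
    simp only [h0, lintegral_zero]
    exact zero_le

lemma lintegral_pi_prod (m : ℕ) (g : ℝ → ℝ≥0∞) (hg : Measurable g) :
    ∫⁻ z : Fin m → ℝ, ∏ l, g (z l) = (∫⁻ t, g t) ^ m := by
  induction m with
  | zero => simp [volume_pi, lintegral_one]
  | succ m ih =>
    have pres := measurePreserving_piFinSuccAbove (fun _ : Fin (m + 1) => (volume : Measure ℝ)) 0
    have e := MeasurableEquiv.piFinSuccAbove (fun _ : Fin (m + 1) => ℝ) 0
    rw [volume_pi]
    rw [MeasurePreserving.lintegral_map_equiv _ _ (pres.symm _)]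
    have key : ∀ p : ℝ × (Fin m → ℝ),
        (∏ l, g (((MeasurableEquiv.piFinSuccAbove (fun _ : Fin (m + 1) => ℝ) 0).symm p) l))
          = g p.1 * ∏ l, g (p.2 l) := by
      intro p
      rw [Fin.prod_univ_succAbove
        (fun i => g (((MeasurableEquiv.piFinSuccAbove (fun _ : Fin (m + 1) => ℝ) 0).symm p) i)) 0]
      simp [MeasurableEquiv.piFinSuccAbove_symm_apply]
    simp only [key]
    have hg2 : Measurable fun z : Fin m → ℝ => ∏ l, g (z l) :=
      Finset.measurable_prod Finset.univ fun l _ => hg.comp (measurable_pi_apply l)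
    rw [lintegral_prod_mul hg.aemeasurable hg2.aemeasurable]
    rw [← volume_pi, ih, pow_succ, mul_comm]

theorem main_aux (m : ℕ) (R : ℝ) (hR : 1 < R) (a b : Fin (m + 2)) (hab : a < b) :
    ∫ x in {x : Fin (m + 2) → ℝ | (∀ i, x i ∈ Set.Icc (R⁻¹) 1) ∧ Monotone x},
        ((∏ i ∈ Finset.univ \ {a, b}, x i) * (x b) ^ 2)⁻¹ ∂volume
      ≤ (Real.log R) ^ (m + 1) := by
  classical
  have hR0 : (0:ℝ) < R⁻¹ := inv_pos.2 (lt_trans zero_lt_one hR)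
  have hlogR : 0 ≤ Real.log R := Real.log_nonneg hR.le
  set S := {x : Fin (m + 2) → ℝ | (∀ i, x i ∈ Set.Icc (R⁻¹) 1) ∧ Monotone x} with hS
  set f : (Fin (m + 2) → ℝ) → ℝ :=
    fun x => ((∏ i ∈ Finset.univ \ {a, b}, x i) * (x b) ^ 2)⁻¹ with hf
  have hSmeas : MeasurableSet S := by
    have : S = (⋂ i, (fun x : Fin (m + 2) → ℝ => x i) ⁻¹' Set.Icc R⁻¹ 1)
        ∩ ⋂ (i) (k) (_ : i ≤ k), {x : Fin (m + 2) → ℝ | x i ≤ x k} := by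
      ext x
      simp only [hS, Set.mem_setOf_eq, Set.mem_inter_iff, Set.mem_iInter, Set.mem_preimage]
      exact and_congr Iff.rfl ⟨fun h i k hik => h hik, fun h i k hik => h i k hik⟩
    rw [this]
    exact (MeasurableSet.iInter fun i => (measurable_pi_apply i) measurableSet_Icc).inter
      (MeasurableSet.iInter fun i => MeasurableSet.iInter fun k => MeasurableSet.iInter
        fun _ => measurableSet_le (measurable_pi_apply i) (measurable_pi_apply k))
  set w : Fin (m + 2) → ℝ → ℝ≥0∞ :=
    fun i => if i = a ∨ i = b then (fun _ => 1) else mgeAux R with hw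
  set H : (Fin (m + 2) → ℝ) → ℝ≥0∞ :=
    fun x => mfeAux R (x a, x b) * ∏ i, w i (x i) with hH
  have hwmeas : ∀ i, Measurable (w i) := by
    intro i
    by_cases h : i = a ∨ i = b
    · simp only [hw, if_pos h]; exact measurable_const
    · simp only [hw, if_neg h]; exact mgeAux_meas R
  -- pointwise bound
  have hpoint : ∀ x, S.indicator (fun x => ENNReal.ofReal ‖f x‖) x ≤ H x := by
    intro x
    by_cases hx : x ∈ S
    · rw [Set.indicator_of_mem hx]
      obtain ⟨hx1, hx2⟩ := hx
      have hxpos : ∀ i, 0 < x i := fun i => lt_of_lt_of_le hR0 (hx1 i).1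
      have hfe : mfeAux R (x a, x b) = ENNReal.ofReal ((x b ^ 2)⁻¹) :=
        if_pos ⟨hx1 a, hx2 hab.le, (hx1 b).2⟩
      have hprod : ∏ i, w i (x i)
          = ENNReal.ofReal (∏ i ∈ Finset.univ \ {a, b}, (x i)⁻¹) := by
        rw [← Finset.prod_sdiff (Finset.subset_univ ({a, b} : Finset (Fin (m + 2))))]
        have h2 : ∏ i ∈ ({a, b} : Finset (Fin (m + 2))), w i (x i) = 1 := by
          rw [Finset.prod_pair hab.ne]
          simp [hw]
        rw [h2, mul_one]
        rw [ENNReal.ofReal_prod_of_nonneg fun i _ => (inv_nonneg.2 (hxpos i).le)]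
        apply Finset.prod_congr rfl
        intro i hi
        simp only [Finset.mem_sdiff, Finset.mem_insert, Finset.mem_singleton] at hi
        have : w i = mgeAux R := by
          simp only [hw]; rw [if_neg]; push_neg; exact ⟨fun h => hi.2 (Or.inl h), fun h => hi.2 (Or.inr h)⟩
        rw [this]
        exact Set.indicator_of_mem (hx1 i) _
      have hfx : f x = (x b ^ 2)⁻¹ * ∏ i ∈ Finset.univ \ {a, b}, (x i)⁻¹ := by
        simp only [hf]
        rw [mul_inv, Finset.prod_inv_distrib, mul_comm]
      have hfnn : 0 ≤ f x := by
        rw [hfx]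
        exact mul_nonneg (by positivity)
          (Finset.prod_nonneg fun i _ => inv_nonneg.2 (hxpos i).le)
      rw [Real.norm_of_nonneg hfnn]
      apply le_of_eq
      show ENNReal.ofReal (f x) = H x
      simp only [hH]
      rw [hfe, hprod, ← ENNReal.ofReal_mul (by positivity), hfx]
    · rw [Set.indicator_of_notMem hx]
      exact zero_le
  -- the key lintegral bound
  have hHmeas : Measurable H := by
    apply Measurable.mul
    · exact (mfeAux_meas R).comp ((measurable_pi_apply a).prodMk (measurable_pi_apply b))
    · exact Finset.measurable_prod _ fun i _ => (hwmeas i).comp (measurable_pi_apply i)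
  -- index bookkeeping
  have hb1 : 1 ≤ b.1 := by
    have := hab; rw [Fin.lt_def] at this; omega
  set b' : Fin (m + 1) := ⟨b.1 - 1, by omega⟩ with hb'
  have hsb : a.succAbove b' = b := by
    have hlt : a < b := hab
    rw [Fin.lt_def] at hlt
    rw [Fin.succAbove, if_neg]
    · apply Fin.ext; simp [Fin.succ, hb']; omega
    · simp only [not_lt, Fin.le_def, Fin.castSucc, Fin.castAdd, Fin.castLE, hb']
      omega
  have hwa : ∀ k : Fin (m + 1), k ≠ b' → w (a.succAbove k) = mgeAux R := by
    intro k hk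
    simp only [hw]
    rw [if_neg]
    push_neg
    constructor
    · exact Fin.succAbove_ne a k
    · intro hc; exact hk (Fin.succAbove_right_injective (by rw [hsb, hc]))
  have key : ∫⁻ x, H x ≤ ENNReal.ofReal (Real.log R) ^ (m + 1) := by
    have pres1 := measurePreserving_piFinSuccAbove (fun _ : Fin (m + 2) => (volume : Measure ℝ)) a
    rw [volume_pi, MeasurePreserving.lintegral_map_equiv _ _ (pres1.symm _)]
    have hH1 : ∀ p : ℝ × (Fin (m + 1) → ℝ),
        H ((MeasurableEquiv.piFinSuccAbove (fun _ : Fin (m + 2) => ℝ) a).symm p)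
          = mfeAux R (p.1, p.2 b') * ∏ k, w (a.succAbove k) (p.2 k) := by
      intro p
      simp only [MeasurableEquiv.piFinSuccAbove_symm_apply, hH]
      rw [Fin.prod_univ_succAbove (fun i =>
        w i ((Fin.insertNthEquiv (fun _ : Fin (m + 2) => ℝ) a) p i)) a]
      simp only [Fin.insertNthEquiv_apply, Fin.insertNth_apply_same,
        Fin.insertNth_apply_succAbove]
      have hwa1 : w a p.1 = 1 := by simp [hw]
      rw [hwa1, one_mul, ← hsb, Fin.insertNth_apply_succAbove]
    simp only [hH1]
    have hmeas2 : Measurable (fun p : ℝ × (Fin (m + 1) → ℝ) =>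
        mfeAux R (p.1, p.2 b') * ∏ k, w (a.succAbove k) (p.2 k)) := by
      apply Measurable.mul
      · exact (mfeAux_meas R).comp
          (measurable_fst.prodMk ((measurable_pi_apply b').comp measurable_snd))
      · exact Finset.measurable_prod _ fun k _ =>
          (hwmeas _).comp ((measurable_pi_apply k).comp measurable_snd)
    rw [lintegral_prod _ hmeas2.aemeasurable]
    -- inner integral computation
    have inner : ∀ s : ℝ,
        ∫⁻ y : Fin (m + 1) → ℝ, mfeAux R (s, y b') * ∏ k, w (a.succAbove k) (y k)
            ∂(Measure.pi fun _ => volume)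
          = (∫⁻ t, mfeAux R (s, t)) * ENNReal.ofReal (Real.log R) ^ m := by
      intro s
      have pres2 := measurePreserving_piFinSuccAbove (fun _ : Fin (m + 1) => (volume : Measure ℝ)) b'
      rw [MeasurePreserving.lintegral_map_equiv _ _ (pres2.symm _)]
      have hH2 : ∀ q : ℝ × (Fin m → ℝ),
          (fun y : Fin (m + 1) → ℝ => mfeAux R (s, y b') * ∏ k, w (a.succAbove k) (y k))
            ((MeasurableEquiv.piFinSuccAbove (fun _ : Fin (m + 1) => ℝ) b').symm q)
            = mfeAux R (s, q.1) * ∏ l, mgeAux R (q.2 l) := by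
        intro q
        simp only [MeasurableEquiv.piFinSuccAbove_symm_apply]
        rw [Fin.prod_univ_succAbove (fun k =>
          w (a.succAbove k) ((Fin.insertNthEquiv (fun _ : Fin (m + 1) => ℝ) b') q k)) b']
        simp only [Fin.insertNthEquiv_apply, Fin.insertNth_apply_same,
          Fin.insertNth_apply_succAbove]
        have h1 : w (a.succAbove b') q.1 = 1 := by rw [hsb]; simp [hw]
        rw [h1, one_mul]
        congr 1
        apply Finset.prod_congr rfl
        intro l _
        rw [hwa (b'.succAbove l) (Fin.succAbove_ne b' l)]
      simp only [hH2]
      have hm1 : Measurable fun t : ℝ => mfeAux R (s, t) :=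
        (mfeAux_meas R).comp (measurable_const.prodMk measurable_id)
      have hm2 : Measurable fun z : Fin m → ℝ => ∏ l, mgeAux R (z l) :=
        Finset.measurable_prod Finset.univ fun l _ =>
          (mgeAux_meas R).comp (measurable_pi_apply l)
      rw [lintegral_prod_mul hm1.aemeasurable hm2.aemeasurable]
      rw [← volume_pi, lintegral_pi_prod m (mgeAux R) (mgeAux_meas R), lintegral_mgeAux R hR]
    simp only [inner]
    rw [lintegral_mul_const' _ _ (by
      exact ENNReal.pow_ne_top ENNReal.ofReal_ne_top)]
    calc (∫⁻ s, ∫⁻ t, mfeAux R (s, t)) * ENNReal.ofReal (Real.log R) ^ m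
        ≤ (∫⁻ s, mgeAux R s) * ENNReal.ofReal (Real.log R) ^ m := by
          exact mul_le_mul_left (lintegral_mono (lintegral_mfeAux R hR)) _
      _ = ENNReal.ofReal (Real.log R) ^ (m + 1) := by
          rw [lintegral_mgeAux R hR, pow_succ, mul_comm]
  -- final chain
  calc ∫ x in S, f x ∂volume ≤ ‖∫ x in S, f x ∂volume‖ := Real.le_norm_self _
    _ ≤ (∫⁻ x in S, ENNReal.ofReal ‖f x‖ ∂volume).toReal := norm_integral_le_lintegral_norm f
    _ ≤ (Real.log R) ^ (m + 1) := by
        apply ENNReal.toReal_le_of_le_ofReal (by positivity)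
        rw [← lintegral_indicator hSmeas]
        calc ∫⁻ x, S.indicator (fun x => ENNReal.ofReal ‖f x‖) x ≤ ∫⁻ x, H x :=
              lintegral_mono hpoint
          _ ≤ ENNReal.ofReal (Real.log R) ^ (m + 1) := key
          _ = ENNReal.ofReal ((Real.log R) ^ (m + 1)) := (ENNReal.ofReal_pow hlogR _).symm

/-- For `n ≥ 2`, `R > 1` and `1 ≤ j ≤ n-1`, the integral over the simplex
`{R⁻¹ ≤ x_1 ≤ ⋯ ≤ x_n ≤ 1}` of `1/(x_1 ⋯ x_{j-1} · x_{j+1}² · x_{j+2} ⋯ x_n)`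
(the factor `x_j` omitted and `x_{j+1}` squared) is at most `(log R)^(n-1)`.
Here `x : Fin n → ℝ` lists `x_1, …, x_n` (zero-based), so `x_j` is `x ⟨j-1,_⟩`
and `x_{j+1}` is `x ⟨j,_⟩`. -/
theorem simplex_integral_bound (n : ℕ) (hn : 2 ≤ n) (R : ℝ) (hR : 1 < R)
    (j : ℕ) (hj1 : 1 ≤ j) (hj2 : j ≤ n - 1) :
    ∫ x in {x : Fin n → ℝ | (∀ i, x i ∈ Set.Icc (R⁻¹) 1) ∧ Monotone x},
        ((∏ i ∈ Finset.univ \ {(⟨j - 1, by omega⟩ : Fin n), (⟨j, by omega⟩ : Fin n)},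
            x i) * (x ⟨j, by omega⟩) ^ 2)⁻¹ ∂volume
      ≤ (Real.log R) ^ (n - 1) := by
  obtain ⟨m, rfl⟩ : ∃ m, n = m + 2 := ⟨n - 2, by omega⟩
  exact main_aux m R hR ⟨j - 1, by omega⟩ ⟨j, by omega⟩ (by rw [Fin.lt_def]; simp; omega)
end
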